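/- The BV definition violates Interventionism: in the causal model with binary endogenous variables A, C, D, F, E, equations E = F ∨ (¬A ∧ ¬D), F = D, D = C ∨ A, and a context u in which A=1 and C=1, it holds that C=1 BV-causes E=1 w.r.t. (M,u), yet there is no intervention on a subset of {A, D, F} under which E=1 is counterfactually dependent on C=1. -/

import Mathlib

/-!
Structural equation models (causal models) à la Pearl/Halpern, formalizing
Beckers' "The Counterfactual NESS Definition of Causation".

A causal model over a context type `Ctx` (settings of the exogenous variables),
endogenous variables `V` and values `Val` consists of finite nonempty ranges
`R X`, structural equations `F X`, and a strong-recursiveness (acyclicity)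
witness: an order `ord` such that `F X` only depends on variables of lower order.
-/

structure CausalModel (Ctx V Val : Type) where
  R : V → Finset Val
  R_nonempty : ∀ X, (R X).Nonempty
  F : V → Ctx → (V → Val) → Val
  ord : V → ℕ
  F_resp : ∀ X u s s', (∀ Y, ord Y < ord X → s Y = s' Y) → F X u s = F X u s'

namespace CausalModel

variable {Ctx V Val : Type}

/-- The unique solution of the equations in context `u` (it exists and is
unique by strong recursiveness). `(M,u) ⊨ X = x` iff `M.sol u X = x`. -/
noncomputable def sol (M : CausalModel Ctx V Val) (u : Ctx) : V → Val :=
  fun X =>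
    M.F X u (fun Y => if h : M.ord Y < M.ord X then M.sol u Y else (M.R_nonempty Y).choose)
termination_by X => M.ord X
decreasing_by exact h

/-- `M.sol u` indeed solves all the equations. -/
theorem sol_eq (M : CausalModel Ctx V Val) (u : Ctx) (X : V) :
    M.sol u X = M.F X u (M.sol u) := by
  rw [sol]
  exact M.F_resp X u _ _ (fun Y hY => dif_pos hY)

variable [DecidableEq V]

/-- `X⃗ = x⃗` (given by the set `Xs` and the assignment `xs`) is sufficient for
`E = e` w.r.t. `(M, u)`: the equation for `E` outputs `e` on every setting of the
endogenous variables (in their ranges) that agrees with `xs` on `Xs`. -/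
def Sufficient (M : CausalModel Ctx V Val) (u : Ctx) (Xs : Finset V) (xs : V → Val)
    (E : V) (e : Val) : Prop :=
  ∀ s : V → Val, (∀ Y, s Y ∈ M.R Y) → (∀ X ∈ Xs, s X = xs X) → M.F E u s = e

/-- The intervened model `M_{X⃗ ← x⃗}`: the equations of variables in `Xs` are
replaced by the constants given by `xs`. -/
def intervene (M : CausalModel Ctx V Val) (Xs : Finset V) (xs : V → Val) :
    CausalModel Ctx V Val where
  R := M.R
  R_nonempty := M.R_nonempty
  F := fun X u s => if X ∈ Xs then xs X else M.F X u s
  ord := M.ord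
  F_resp := by
    intro X u s s' h
    by_cases hX : X ∈ Xs
    · simp [hX]
    · simpa [hX] using M.F_resp X u s s' h

/-- `W⃗ = w⃗` (given by `Ws, ws`) is a witness for `C = c` directly NESS-causing
`E = e` w.r.t. `(M, u)`: `C = c` and `W⃗ = w⃗` actually hold, `{C = c} ∪ {W⃗ = w⃗}`
is sufficient for `E = e`, and `W⃗ = w⃗` alone is not. -/
def DirectNESSWith (M : CausalModel Ctx V Val) (u : Ctx) (C : V) (c : Val) (E : V) (e : Val)
    (Ws : Finset V) (ws : V → Val) : Prop :=
  M.sol u C = c ∧ (∀ W ∈ Ws, M.sol u W = ws W) ∧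
  M.Sufficient u (insert C Ws) (Function.update ws C c) E e ∧
  ¬ M.Sufficient u Ws ws E e

/-- `C = c` directly NESS-causes `E = e` w.r.t. `(M, u)`. -/
def DirectNESS (M : CausalModel Ctx V Val) (u : Ctx) (C : V) (c : Val) (E : V) (e : Val) :
    Prop :=
  ∃ (Ws : Finset V) (ws : V → Val), M.DirectNESSWith u C c E e Ws ws

/-- `C = c` NESS-causes `E = e` along the path `p = (C₁, …, Cₙ)` w.r.t. `(M, u)`:
there are values `c₁, …, cₙ` such that `C = c` directly NESS-causes `C₁ = c₁`, …,
and `Cₙ = cₙ` directly NESS-causes `E = e`. (A direct NESS-cause is a NESS-cause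
along the empty path.) -/
def NESSAlong (M : CausalModel Ctx V Val) (u : Ctx) (C : V) (c : Val) (p : List V)
    (E : V) (e : Val) : Prop :=
  ∃ cs : List Val, cs.length = p.length ∧
    List.Chain (fun a b => M.DirectNESS u a.1 a.2 b.1 b.2) (C, c) (p.zip cs ++ [(E, e)])

/-- `C = c` NESS-causes `E = e` w.r.t. `(M, u)`: there is a chain of direct
NESS-causes from `C = c` to `E = e`. -/
def NESS (M : CausalModel Ctx V Val) (u : Ctx) (C : V) (c : Val) (E : V) (e : Val) : Prop :=
  ∃ p : List V, M.NESSAlong u C c p E e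

/-- The BV definition: `C = c` NESS-causes `E = e` w.r.t. `(M, u)` and there is a
`c' ∈ R(C)` such that `C = c'` does not NESS-cause `E = e` w.r.t. `(M_{C ← c'}, u)`. -/
def BVCause (M : CausalModel Ctx V Val) (u : Ctx) (C : V) (c : Val) (E : V) (e : Val) :
    Prop :=
  M.NESS u C c E e ∧
    ∃ c' ∈ M.R C, ¬ (M.intervene {C} (fun _ => c')).NESS u C c' E e

/-- The CNESS definition: `C = c` NESS-causes `E = e` along some path `p` w.r.t.
`(M, u)` and there is a `c' ∈ R(C)` such that `C = c'` does not NESS-cause `E = e`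
along any subpath of `p` (a path all of whose variables are in `p`) w.r.t.
`(M_{C ← c'}, u)`. -/
def CNESSCause (M : CausalModel Ctx V Val) (u : Ctx) (C : V) (c : Val) (E : V) (e : Val) :
    Prop :=
  ∃ p : List V, M.NESSAlong u C c p E e ∧
    ∃ c' ∈ M.R C, ∀ p' : List V, (∀ X ∈ p', X ∈ p) →
      ¬ (M.intervene {C} (fun _ => c')).NESSAlong u C c' p' E e

/-- `E = e` is counterfactually dependent on `C = c` w.r.t. `(M, u)`:
`(M,u) ⊨ C = c ∧ E = e` and there is a `c' ∈ R(C)` with `(M,u) ⊨ [C ← c'] ¬(E = e)`. -/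
def CfDep (M : CausalModel Ctx V Val) (u : Ctx) (C : V) (c : Val) (E : V) (e : Val) : Prop :=
  M.sol u C = c ∧ M.sol u E = e ∧
    ∃ c' ∈ M.R C, (M.intervene {C} (fun _ => c')).sol u E ≠ e

/-- `E = e` is counterfactually dependent on `C = c` given the intervention
`X⃗ ← x⃗`: in `M_{X⃗ ← x⃗}` with context `u`, `C = c` and `E = e` hold, and there is
a `c' ∈ R(C)` such that additionally intervening with `C ← c'` makes `E = e` false. -/
def CfDepGiven (M : CausalModel Ctx V Val) (u : Ctx) (Xs : Finset V) (xs : V → Val)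
    (C : V) (c : Val) (E : V) (e : Val) : Prop :=
  (M.intervene Xs xs).sol u C = c ∧ (M.intervene Xs xs).sol u E = e ∧
    ∃ c' ∈ M.R C, ((M.intervene Xs xs).intervene {C} (fun _ => c')).sol u E ≠ e

/-- `Y` is a parent of `X`: the equation `F X` varies with the value of `Y`
for some context and some setting (within the ranges) of the other variables. -/
def Parent (M : CausalModel Ctx V Val) (Y X : V) : Prop :=
  ∃ (u : Ctx) (s : V → Val) (y y' : Val),
    (∀ Z, s Z ∈ M.R Z) ∧ y ∈ M.R Y ∧ y' ∈ M.R Y ∧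
    M.F X u (Function.update s Y y) ≠ M.F X u (Function.update s Y y')

end CausalModel
/-- Variables for the model with equations `E = F ∨ (¬A ∧ ¬D)`, `F = D`, `D = C ∨ A`. -/
inductive V5 | A | C | D | F | E
deriving DecidableEq

/-- The model with equations `E = F ∨ (¬A ∧ ¬D)`, `F = D`, `D = C ∨ A`,
in a context where `A = 1` and `C = 1`. -/
def M5 : CausalModel Unit V5 Bool where
  R := fun _ => Finset.univ
  R_nonempty := fun _ => Finset.univ_nonempty
  F := fun X _ s =>
    match X with
    | .A => true
    | .C => true
    | .D => s .C || s .A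
    | .F => s .D
    | .E => s .F || (!(s .A) && !(s .D))
  ord := fun X => match X with | .A => 0 | .C => 0 | .D => 1 | .F => 2 | .E => 3
  F_resp := by
    intro X u s s' h
    cases X
    · rfl
    · rfl
    · show (s V5.C || s V5.A) = (s' V5.C || s' V5.A)
      rw [h V5.C (by decide), h V5.A (by decide)]
    · show s V5.D = s' V5.D
      exact h V5.D (by decide)
    · show (s V5.F || (!(s V5.A) && !(s V5.D))) = (s' V5.F || (!(s' V5.A) && !(s' V5.D)))
      rw [h V5.A (by decide), h V5.D (by decide), h V5.F (by decide)]

section Aux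

/-- The solution is the unique fixpoint of the equations. -/
theorem CausalModel.sol_unique {Ctx V Val : Type} (M : CausalModel Ctx V Val) (u : Ctx)
    (t : V → Val) (ht : ∀ X, t X = M.F X u t) : ∀ X, M.sol u X = t X := by
  have key : ∀ n, ∀ X, M.ord X < n → M.sol u X = t X := by
    intro n
    induction n with
    | zero => intro X h; omega
    | succ n ih =>
      intro X h
      rw [M.sol_eq, ht X]
      exact M.F_resp X u _ _ (fun Y hY => ih Y (by omega))
  intro X; exact key (M.ord X + 1) X (by omega)

/-- Composing interventions. -/
theorem CausalModel.intervene_intervene {Ctx V Val : Type} [DecidableEq V]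
    (M : CausalModel Ctx V Val) (Xs Ys : Finset V) (xs ys : V → Val) :
    (M.intervene Xs xs).intervene Ys ys
      = M.intervene (Ys ∪ Xs) (fun X => if X ∈ Ys then ys X else xs X) := by
  have hF : (fun X u s => if X ∈ Ys then ys X else (M.intervene Xs xs).F X u s)
      = (fun X (u : Ctx) (s : V → Val) =>
          if X ∈ Ys ∪ Xs then (if X ∈ Ys then ys X else xs X) else M.F X u s) := by
    funext X u s
    by_cases hY : X ∈ Ys <;> by_cases hX : X ∈ Xs <;>
      simp [CausalModel.intervene, hY, hX]
  simp only [CausalModel.intervene]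
  congr 1

/-- Explicit solution of `M5` intervened on `Xs ← xs`. -/
def tsol (Xs : Finset V5) (xs : V5 → Bool) : V5 → Bool := fun X =>
  let a := if V5.A ∈ Xs then xs .A else true
  let c := if V5.C ∈ Xs then xs .C else true
  let d := if V5.D ∈ Xs then xs .D else c || a
  let f := if V5.F ∈ Xs then xs .F else d
  match X with
  | .A => a
  | .C => c
  | .D => d
  | .F => f
  | .E => if V5.E ∈ Xs then xs .E else f || (!a && !d)

theorem sol_intervene (Xs : Finset V5) (xs : V5 → Bool) (X : V5) :
    (M5.intervene Xs xs).sol () X = tsol Xs xs X := by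
  refine CausalModel.sol_unique _ () (tsol Xs xs) (fun Y => ?_) X
  cases Y <;> rfl

theorem M5_sol (X : V5) : M5.sol () X = true := by
  refine CausalModel.sol_unique _ () (fun _ => true) (fun Y => ?_) X
  cases Y <;> rfl

/-- In `M5` with `C` intervened to `false`, `C = false` is not a direct NESS-cause
of anything. -/
theorem no_direct (X : V5) (x : Bool) :
    ¬ (M5.intervene {V5.C} (fun _ => false)).DirectNESS () V5.C false X x := by
  rintro ⟨Ws, ws, hC, hWs, hsuf, hnsuf⟩
  have hmem : ∀ s : V5 → Bool, ∀ Y, s Y ∈ (M5.intervene {V5.C} (fun _ => false)).R Y := by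
    intro s Y; simp [CausalModel.intervene, M5]
  have h0 := hsuf (Function.update ws V5.C false) (hmem _) (fun _ _ => rfl)
  cases X with
  | A =>
    have hx : x = true := by simpa [CausalModel.intervene, M5] using h0
    exact hnsuf (fun s _ _ => by simp [CausalModel.intervene, M5, hx])
  | C =>
    have hx : x = false := by simpa [CausalModel.intervene, M5] using h0
    exact hnsuf (fun s _ _ => by simp [CausalModel.intervene, M5, hx])
  | D =>
    by_cases hA : V5.A ∈ Ws
    · have hwsA : ws V5.A = true := by
        have := hWs V5.A hA
        rw [sol_intervene] at this
        simpa [tsol] using this.symm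
      have hx : x = true := by
        simpa [CausalModel.intervene, M5, Function.update, hwsA] using h0
      refine hnsuf (fun s _ hs => ?_)
      have hsA : s V5.A = true := (hs _ hA).trans hwsA
      simp [CausalModel.intervene, M5, hsA, hx]
    · have hag : ∀ b : Bool, ∀ Y ∈ insert V5.C Ws,
          Function.update (Function.update ws V5.C false) V5.A b Y
            = Function.update ws V5.C false Y := by
        intro b Y hY
        have hYA : Y ≠ V5.A := by
          rcases Finset.mem_insert.mp hY with h | h
          · subst h; decide
          · rintro rfl; exact hA h
        simp [Function.update, hYA]
      have h1 := hsuf _ (hmem _) (hag true)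
      have h2 := hsuf _ (hmem _) (hag false)
      simp [CausalModel.intervene, M5, Function.update] at h1 h2
      subst h1; exact absurd h2 (by decide)
  | F =>
    by_cases hD : V5.D ∈ Ws
    · have hwsD : ws V5.D = true := by
        have := hWs V5.D hD
        rw [sol_intervene] at this
        simpa [tsol] using this.symm
      have hx : x = true := by
        simpa [CausalModel.intervene, M5, Function.update, hwsD] using h0
      refine hnsuf (fun s _ hs => ?_)
      have hsD : s V5.D = true := (hs _ hD).trans hwsD
      simp [CausalModel.intervene, M5, hsD, hx]
    · have hag : ∀ b : Bool, ∀ Y ∈ insert V5.C Ws,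
          Function.update (Function.update ws V5.C false) V5.D b Y
            = Function.update ws V5.C false Y := by
        intro b Y hY
        have hYD : Y ≠ V5.D := by
          rcases Finset.mem_insert.mp hY with h | h
          · subst h; decide
          · rintro rfl; exact hD h
        simp [Function.update, hYD]
      have h1 := hsuf _ (hmem _) (hag true)
      have h2 := hsuf _ (hmem _) (hag false)
      simp [CausalModel.intervene, M5, Function.update] at h1 h2
      subst h1; exact absurd h2 (by decide)
  | E =>
    refine hnsuf (fun s _ hs => ?_)
    have hag : ∀ Y ∈ insert V5.C Ws,
        Function.update s V5.C false Y = Function.update ws V5.C false Y := by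
      intro Y hY
      by_cases hYC : Y = V5.C
      · subst hYC; simp
      · rcases Finset.mem_insert.mp hY with h | h
        · exact absurd h hYC
        · simp [Function.update, hYC, hs Y h]
    have h1 := hsuf _ (hmem _) hag
    simpa [CausalModel.intervene, M5, Function.update] using h1

end Aux

/-- The BV definition violates Interventionism: in the model with
equations `E = F ∨ (¬A ∧ ¬D)`, `F = D`, `D = C ∨ A` and a context with `A = 1` and
`C = 1`, `C = 1` BV-causes `E = 1`, yet there is no intervention on a subset of
`{A, D, F}` under which `E = 1` is counterfactually dependent on `C = 1`. -/
theorem bv_violates_interventionism :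
    M5.BVCause () V5.C true V5.E true ∧
      ∀ (Xs : Finset V5) (xs : V5 → Bool), Xs ⊆ {V5.A, V5.D, V5.F} →
        ¬ M5.CfDepGiven () Xs xs V5.C true V5.E true := by
  constructor
  · constructor
    · -- NESS via the path [D, F]
      refine ⟨[V5.D, V5.F], [true, true], rfl, ?_⟩
      show List.Chain _ (V5.C, true) [(V5.D, true), (V5.F, true), (V5.E, true)]
      refine List.Chain.cons ?_ (List.Chain.cons ?_ (List.Chain.cons ?_ List.Chain.nil))
      · -- C = 1 directly NESS-causes D = 1
        refine ⟨∅, fun _ => true, M5_sol _, by simp, ?_, ?_⟩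
        · intro s _ hs
          have hsC : s V5.C = true := by simpa using hs V5.C (Finset.mem_insert_self _ _)
          simp [M5, hsC]
        · intro h
          have := h (fun _ => false) (fun Y => by simp [M5]) (by simp)
          simp [M5] at this
      · -- D = 1 directly NESS-causes F = 1
        refine ⟨∅, fun _ => true, M5_sol _, by simp, ?_, ?_⟩
        · intro s _ hs
          have hsD : s V5.D = true := by simpa using hs V5.D (Finset.mem_insert_self _ _)
          simp [M5, hsD]
        · intro h
          have := h (fun _ => false) (fun Y => by simp [M5]) (by simp)
          simp [M5] at this
      · -- F = 1 directly NESS-causes E = 1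
        refine ⟨∅, fun _ => true, M5_sol _, by simp, ?_, ?_⟩
        · intro s _ hs
          have hsF : s V5.F = true := by simpa using hs V5.F (Finset.mem_insert_self _ _)
          simp [M5, hsF]
        · intro h
          have := h (fun Y => match Y with | V5.F => false | _ => true)
            (fun Y => by simp [M5]) (by simp)
          simp [M5] at this
    · -- C = 0 does not NESS-cause E = 1 in M_{C ← 0}
      refine ⟨false, by simp [M5], ?_⟩
      rintro ⟨p, cs, hlen, hchain⟩
      cases h : p.zip cs with
      | nil =>
        rw [h, List.nil_append] at hchain
        cases hchain with
        | cons_cons hr _ => exact no_direct V5.E true hr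
      | cons b l =>
        rw [h, List.cons_append] at hchain
        cases hchain with
        | cons_cons hr _ => exact no_direct b.1 b.2 hr
  · -- No intervention on a subset of {A, D, F} yields counterfactual dependence
    intro Xs xs hsub
    rintro ⟨hC, hE, c', _, hne⟩
    have hCX : V5.C ∉ Xs := fun h => by have := hsub h; revert this; decide
    have hEX : V5.E ∉ Xs := fun h => by have := hsub h; revert this; decide
    rw [sol_intervene] at hE
    rw [CausalModel.intervene_intervene, sol_intervene] at hne
    by_cases hA : V5.A ∈ Xs <;> by_cases hD : V5.D ∈ Xs <;> by_cases hF : V5.F ∈ Xs <;>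
      simp [tsol, hA, hD, hF, hCX, hEX] at hE hne <;>
      revert hE hne <;>
      cases c' <;> cases xs V5.A <;> cases xs V5.D <;> cases xs V5.F <;> simp
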